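/- Let A, B ⊂ Δ^(d) be disjoint compact convex subsets of the probability simplex of dimension d ≥ 2 (so Δ^(d) ⊂ ℝ^{d+1}). Then there exist affine maps Q_i : ℝ^{d+1−i} → ℝ^{d−i} (i = 1,…,d−2) mapping Δ^{(d+1−i)} into Δ^{(d−i)} such that the images Â = (Q_{d−2} ∘ … ∘ Q_1)(A) and B̂ = (Q_{d−2} ∘ … ∘ Q_1)(B), which lie in Δ^(2), remain disjoint. -/

import Mathlib

/-- The probability simplex on `n` coordinates: `Δ^(k)` of the paper is `probSimplex (k+1)`. -/
def probSimplex (n : ℕ) : Set (Fin n → ℝ) :=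
  {x | (∀ i, 0 ≤ x i) ∧ ∑ i, x i = 1}

/-- Composition of `s` dimension-reducing affine maps, starting from dimension `n`:
`chainQ Q n s` maps `ℝ^n` to `ℝ^(n-s)` by applying `Q n`, then `Q (n-1)`, …  (Here
`Q m : ℝ^m → ℝ^(m-1)`.) -/
def chainQ (Q : ∀ m : ℕ, (Fin m → ℝ) →ᵃ[ℝ] (Fin (m - 1) → ℝ)) :
    (n s : ℕ) → (Fin n → ℝ) → (Fin (n - s) → ℝ)
  | _, 0 => id
  | n, s + 1 => fun x => Q (n - s) (chainQ Q n s x)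

/-- Auxiliary: sum over `Fin k` (k ≥ 2) of a function supported on indices 0 and 1. -/
lemma sum_two_ifs (k : ℕ) (hk : 2 ≤ k) (a b : ℝ) :
    ∑ i : Fin k, (if (i : ℕ) = 0 then a else if (i : ℕ) = 1 then b else 0) = a + b := by
  have key : ∀ i : Fin k,
      (if (i : ℕ) = 0 then a else if (i : ℕ) = 1 then b else 0)
      = (if i = (⟨0, by omega⟩ : Fin k) then a else 0)
        + (if i = (⟨1, by omega⟩ : Fin k) then b else 0) := by
    intro i
    rcases i with ⟨i, hi⟩
    by_cases h0 : i = 0 <;> by_cases h1 : i = 1 <;>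
      simp [h0, h1, Fin.ext_iff] <;> omega
  rw [Finset.sum_congr rfl (fun i _ => key i), Finset.sum_add_distrib,
    Finset.sum_ite_eq' Finset.univ, Finset.sum_ite_eq' Finset.univ]
  simp

/-- The basic family of linear (hence affine) quantization maps, parametrized by
weights `θ m : Fin m → ℝ`. -/
noncomputable def mkQ (θ : ∀ m : ℕ, Fin m → ℝ) (m : ℕ) :
    (Fin m → ℝ) →ₗ[ℝ] (Fin (m - 1) → ℝ) where
  toFun x i :=
    if (i : ℕ) = 0 then ∑ j, θ m j * x j
    else if (i : ℕ) = 1 then ∑ j, (1 - θ m j) * x j else 0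
  map_add' x y := by
    funext i
    by_cases h0 : (i : ℕ) = 0 <;> by_cases h1 : (i : ℕ) = 1 <;>
      simp [h0, h1, mul_add, Finset.sum_add_distrib]
  map_smul' c x := by
    funext i
    by_cases h0 : (i : ℕ) = 0 <;> by_cases h1 : (i : ℕ) = 1 <;>
      simp [h0, h1, Finset.mul_sum] <;> ring_nf <;>
      exact Finset.sum_congr rfl fun j _ => by ring

lemma mkQ_mapsTo (θ : ∀ m : ℕ, Fin m → ℝ)
    (hθ0 : ∀ m j, 0 ≤ θ m j) (hθ1 : ∀ m j, θ m j ≤ 1)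
    (m : ℕ) (hm : 3 ≤ m) :
    Set.MapsTo ((mkQ θ m).toAffineMap) (probSimplex m) (probSimplex (m - 1)) := by
  intro x hx
  obtain ⟨hx0, hx1⟩ := hx
  constructor
  · intro i
    by_cases h0 : (i : ℕ) = 0
    · simp only [mkQ, LinearMap.toAffineMap, AffineMap.coe_mk, LinearMap.coe_mk,
        AddHom.coe_mk, h0, if_pos]
      exact Finset.sum_nonneg fun j _ => mul_nonneg (hθ0 m j) (hx0 j)
    · by_cases h1 : (i : ℕ) = 1
      · simp only [mkQ, LinearMap.toAffineMap, AffineMap.coe_mk, LinearMap.coe_mk,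
          AddHom.coe_mk, h0, h1, if_neg, if_pos]
        exact Finset.sum_nonneg fun j _ =>
          mul_nonneg (by linarith [hθ1 m j]) (hx0 j)
      · simp [mkQ, h0, h1]
  · show (∑ i : Fin (m - 1), _) = 1
    have h2 : 2 ≤ m - 1 := by omega
    calc ∑ i : Fin (m - 1), (mkQ θ m).toAffineMap x i
        = ∑ i : Fin (m - 1), (if (i : ℕ) = 0 then ∑ j, θ m j * x j
            else if (i : ℕ) = 1 then ∑ j, (1 - θ m j) * x j else 0) := rfl
      _ = (∑ j, θ m j * x j) + ∑ j, (1 - θ m j) * x j := sum_two_ifs _ h2 _ _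
      _ = ∑ j, x j := by
          rw [← Finset.sum_add_distrib]
          exact Finset.sum_congr rfl fun j _ => by ring
      _ = 1 := hx1

/-- Quantization lemma: for disjoint compact convex subsets `A, B` of the probability
simplex `Δ^(d) ⊂ ℝ^{d+1}` (`d ≥ 2`), there exist affine maps, each mapping the
probability simplex of one dimension into that of the next lower dimension, whose
composition (`d−2` steps, ending in `Δ^(2) ⊂ ℝ^3`) keeps the images of `A` and `B`
disjoint. -/
theorem stmt_10 (d : ℕ) (hd : 2 ≤ d)
    (A B : Set (Fin (d + 1) → ℝ))
    (hA : A ⊆ probSimplex (d + 1)) (hB : B ⊆ probSimplex (d + 1))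
    (hAB : Disjoint A B)
    (hAc : IsCompact A) (hBc : IsCompact B)
    (hAv : Convex ℝ A) (hBv : Convex ℝ B) :
    ∃ Q : ∀ m : ℕ, (Fin m → ℝ) →ᵃ[ℝ] (Fin (m - 1) → ℝ),
      (∀ m : ℕ, 4 ≤ m → m ≤ d + 1 → Set.MapsTo (Q m) (probSimplex m) (probSimplex (m - 1)))
      ∧ Disjoint (chainQ Q (d + 1) (d - 2) '' A) (chainQ Q (d + 1) (d - 2) '' B) := by
  -- strict separation of A and B
  obtain ⟨f, u, v, hfa, huv, hfb⟩ :=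
    geometric_hahn_banach_compact_closed hAv hAc hBv hBc.isClosed hAB
  -- coefficients of f on the standard basis
  set c : Fin (d + 1) → ℝ := fun j => f (fun k => if j = k then 1 else 0) with hc
  set cmin : ℝ := Finset.univ.inf' ⟨0, Finset.mem_univ 0⟩ c with hcmin
  set M : ℝ := Finset.univ.sup' ⟨0, Finset.mem_univ 0⟩ c - cmin + 1 with hM
  have hMpos : 0 < M := by
    have : cmin ≤ Finset.univ.sup' ⟨0, Finset.mem_univ 0⟩ c := by
      refine le_trans (Finset.inf'_le c (Finset.mem_univ 0)) ?_
      exact Finset.le_sup' c (Finset.mem_univ 0)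
    rw [hM]; linarith
  have hcmin_le : ∀ j, cmin ≤ c j := fun j => Finset.inf'_le c (Finset.mem_univ j)
  have hc_le : ∀ j, c j - cmin < M := by
    intro j
    have : c j ≤ Finset.univ.sup' ⟨0, Finset.mem_univ 0⟩ c :=
      Finset.le_sup' c (Finset.mem_univ j)
    rw [hM]; linarith
  -- the weights
  set lamN : ℕ → ℝ := fun j => if h : j < d + 1 then (c ⟨j, h⟩ - cmin) / M else 0 with hlamN
  have hlam0 : ∀ j, 0 ≤ lamN j := by
    intro j; rw [hlamN]; dsimp only
    split
    · exact div_nonneg (by linarith [hcmin_le ⟨j, ‹_›⟩]) hMpos.le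
    · exact le_refl 0
  have hlam1 : ∀ j, lamN j ≤ 1 := by
    intro j; rw [hlamN]; dsimp only
    split
    · rw [div_le_one hMpos]; linarith [hc_le ⟨j, ‹_›⟩]
    · exact zero_le_one
  set θ : ∀ m : ℕ, Fin m → ℝ := fun m j =>
    if m = d + 1 then lamN (j : ℕ) else if (j : ℕ) = 0 then 1 else 0 with hθ
  have hθ0 : ∀ m j, 0 ≤ θ m j := by
    intro m j; rw [hθ]; dsimp only; split
    · exact hlam0 _
    · split <;> norm_num
  have hθ1 : ∀ m j, θ m j ≤ 1 := by
    intro m j; rw [hθ]; dsimp only; split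
    · exact hlam1 _
    · split <;> norm_num
  refine ⟨fun m => (mkQ θ m).toAffineMap, fun m hm4 _ => mkQ_mapsTo θ hθ0 hθ1 m (by omega), ?_⟩
  -- the value carried in coordinate 0
  set t : (Fin (d + 1) → ℝ) → ℝ := fun x => ∑ j : Fin (d + 1), lamN (j : ℕ) * x j with ht
  -- f evaluated via basis coefficients
  have hfx : ∀ x : Fin (d + 1) → ℝ, f x = ∑ j, x j * c j := by
    intro x
    have := (f : (Fin (d+1) → ℝ) →ₗ[ℝ] ℝ).pi_apply_eq_sum_univ x
    simpa [hc, smul_eq_mul] using this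
  -- t is an increasing affine image of f on the simplex
  have htval : ∀ x ∈ probSimplex (d + 1), t x = (f x - cmin) / M := by
    intro x hx
    rw [ht]; dsimp only
    have : ∀ j : Fin (d + 1), lamN (j : ℕ) * x j = (c j * x j - cmin * x j) / M := by
      intro j
      rw [hlamN]; dsimp only
      rw [dif_pos j.isLt]
      rw [div_mul_eq_mul_div, sub_mul, Fin.eta]
    rw [Finset.sum_congr rfl fun j _ => this j, ← Finset.sum_div, hfx x]
    congr 1
    rw [Finset.sum_sub_distrib, ← Finset.mul_sum, hx.2, mul_one]
    congr 1
    exact Finset.sum_congr rfl fun j _ => mul_comm _ _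
  have hsep : ∀ a ∈ A, ∀ b ∈ B, t a < t b := by
    intro a ha b hb
    rw [htval a (hA ha), htval b (hB hb)]
    have := hfa a ha
    have := hfb b hb
    gcongr
    linarith
  -- coordinate 0 of the chain computes t
  have hchain : ∀ s : ℕ, 1 ≤ s → s ≤ d - 2 → ∀ x : Fin (d + 1) → ℝ,
      ∀ i : Fin (d + 1 - s), (i : ℕ) = 0 →
      (chainQ (fun m => (mkQ θ m).toAffineMap) (d + 1) s x) i = t x := by
    intro s
    induction s with
    | zero => omega
    | succ s ih =>
      intro _ hs2 x i hi0
      rcases Nat.eq_zero_or_pos s with rfl | hs1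
      · -- base case: one application, of Q (d+1)
        show (if (i : ℕ) = 0 then (∑ j : Fin (d + 1), θ (d + 1) j * x j) else _) = t x
        rw [if_pos hi0, ht]
        refine Finset.sum_congr rfl fun j _ => ?_
        rw [hθ]; simp
      · -- inductive step: Q (d+1-s) preserves coordinate 0
        have hm : d + 1 - s ≠ d + 1 := by omega
        have key : ∀ j : Fin (d + 1 - s), θ (d + 1 - s) j = if (j : ℕ) = 0 then 1 else 0 := by
          intro j; rw [hθ]; simp [hm]
        show (if (i : ℕ) = 0 then (∑ j : Fin (d + 1 - s),
            θ (d + 1 - s) j * (chainQ (fun m => (mkQ θ m).toAffineMap) (d + 1) s x) j)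
            else _) = t x
        rw [if_pos hi0]
        have hpos : 0 < d + 1 - s := by omega
        calc ∑ j : Fin (d + 1 - s),
              θ (d + 1 - s) j * (chainQ (fun m => (mkQ θ m).toAffineMap) (d + 1) s x) j
            = ∑ j : Fin (d + 1 - s), (if j = (⟨0, hpos⟩ : Fin (d + 1 - s)) then
                (chainQ (fun m => (mkQ θ m).toAffineMap) (d + 1) s x) j else 0) := by
              refine Finset.sum_congr rfl fun j _ => ?_
              rw [key j]
              by_cases h0 : (j : ℕ) = 0
              · rw [if_pos h0, if_pos (Fin.ext h0), one_mul]
              · rw [if_neg h0, if_neg (fun h => h0 (by rw [h])), zero_mul]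
          _ = (chainQ (fun m => (mkQ θ m).toAffineMap) (d + 1) s x) ⟨0, hpos⟩ := by
              rw [Finset.sum_ite_eq' Finset.univ]; simp
          _ = t x := ih hs1 (by omega) x ⟨0, hpos⟩ rfl
  -- conclude disjointness
  by_cases hd2 : d = 2
  · subst hd2
    show Disjoint (chainQ _ (2 + 1) 0 '' A) (chainQ _ (2 + 1) 0 '' B)
    simpa only [chainQ, Set.image_id] using hAB
  · have hd3 : 3 ≤ d := by omega
    rw [Set.disjoint_left]
    rintro z ⟨a, ha, rfl⟩ ⟨b, hb, hzb⟩
    have h1 := hchain (d - 2) (by omega) le_rfl a ⟨0, by omega⟩ rfl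
    have h2 := hchain (d - 2) (by omega) le_rfl b ⟨0, by omega⟩ rfl
    have h3 := congrFun hzb (⟨0, by omega⟩ : Fin (d + 1 - (d - 2)))
    rw [h1, h2] at h3
    exact absurd h3.symm (ne_of_lt (hsep a ha b hb))
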